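/- Let T(n) be the sum of t(i) for 0 <= i <= n. Then the limit superior, as n tends to infinity, of the real sequence T(n)/n^2 equals 2/3. -/

import Mathlib

set_option maxHeartbeats 1000000


/-- Let `t` be the toothpick increment sequence and `T n = ∑_{i=0}^{n} t i`.
Then the limit superior of the real sequence `T n / n^2` equals `2/3`. -/
theorem toothpick_limsup
    (t : ℕ → ℕ)
    (ht0 : t 0 = 0) (ht1 : t 1 = 1)
    (htpow : ∀ k, 1 ≤ k → t (2 ^ k) = 2 ^ k)
    (htrec : ∀ k, 1 ≤ k → ∀ i, 1 ≤ i → i ≤ 2 ^ k - 1 →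
      t (2 ^ k + i) = 2 * t i + t (i + 1))
    (T : ℕ → ℕ)
    (hT : ∀ n, T n = ∑ i ∈ Finset.range (n + 1), t i) :
    Filter.limsup (fun n : ℕ => (T n : ℝ) / (n : ℝ) ^ 2) Filter.atTop = 2 / 3 := by
  have hstep : ∀ m : ℕ, T (m + 1) = T m + t (m + 1) := by
    intro m
    rw [hT, hT, Finset.sum_range_succ]
  have hT0 : T 0 = 0 := by rw [hT]; simp [ht0]
  have hT1 : T 1 = 1 := by
    rw [hT]
    simp [Finset.sum_range_succ, ht0, ht1]
  have ht2 : t 2 = 2 := by simpa using htpow 1 le_rfl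
  have hT2 : T 2 = 3 := by
    rw [hT]
    simp [Finset.sum_range_succ, ht0, ht1, ht2]
  -- Lemma A : partial sum recurrence
  have lemA : ∀ k, 1 ≤ k → ∀ j, 1 ≤ j → j ≤ 2 ^ k - 1 →
      T (2 ^ k + j) + 1 = T (2 ^ k) + 2 * T j + T (j + 1) := by
    intro k hk
    have h2k : 2 ≤ 2 ^ k := by
      calc 2 = 2 ^ 1 := rfl
      _ ≤ 2 ^ k := Nat.pow_le_pow_right (by norm_num) hk
    intro j
    induction j with
    | zero => omega
    | succ j ih =>
      intro _ h2
      rcases Nat.eq_zero_or_pos j with hj0 | hjpos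
      · subst hj0
        have e1 : T (2 ^ k + 1) = T (2 ^ k) + t (2 ^ k + 1) := hstep _
        have e2 : t (2 ^ k + 1) = 2 * t 1 + t 2 := htrec k hk 1 le_rfl (by omega)
        rw [e1, e2, ht1, ht2, hT1, hT2]
      · have ihh := ih hjpos (by omega)
        have e2 : t (2 ^ k + (j + 1)) = 2 * t (j + 1) + t (j + 2) :=
          htrec k hk (j + 1) (by omega) (by omega)
        have e3 : T (j + 1) = T j + t (j + 1) := hstep j
        have e4 : T (j + 1 + 1) = T (j + 1) + t (j + 1 + 1) := hstep (j + 1)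
        have e6 : j + 1 + 1 = j + 2 := by omega
        rw [e6] at e4
        have e5 := hstep (2 ^ k + j)
        rw [Nat.add_assoc] at e5
        rw [e6]
        omega
  -- Lemma B : exact values at powers of two
  have lemB : ∀ k : ℕ, 3 * T (2 ^ k) = 2 * 4 ^ k + 1 ∧
      3 * T (2 ^ k - 1) + 3 * 2 ^ k = 2 * 4 ^ k + 1 := by
    intro k
    induction k with
    | zero => simp [hT1, hT0]
    | succ k ih =>
      rcases Nat.eq_zero_or_pos k with h0 | hk
      · subst h0; norm_num [hT2, hT1]
      · obtain ⟨ih1, ih2⟩ := ih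
        have h2k : 2 ≤ 2 ^ k := by
          calc 2 = 2 ^ 1 := rfl
          _ ≤ 2 ^ k := Nat.pow_le_pow_right (by norm_num) hk
        have hA := lemA k hk (2 ^ k - 1) (by omega) le_rfl
        have e1 : 2 ^ k + (2 ^ k - 1) = 2 ^ (k + 1) - 1 := by
          rw [pow_succ]; omega
        have e2 : 2 ^ k - 1 + 1 = 2 ^ k := by omega
        rw [e1, e2] at hA
        have hlast : T (2 ^ (k + 1)) = T (2 ^ (k + 1) - 1) + t (2 ^ (k + 1)) := by
          have := hstep (2 ^ (k + 1) - 1)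
          have e3 : 2 ^ (k + 1) - 1 + 1 = 2 ^ (k + 1) := by
            have : 2 ≤ 2 ^ (k + 1) := by
              calc 2 = 2 ^ 1 := rfl
              _ ≤ 2 ^ (k + 1) := Nat.pow_le_pow_right (by norm_num) (by omega)
            omega
          rwa [e3] at this
        have htp : t (2 ^ (k + 1)) = 2 ^ (k + 1) := htpow (k + 1) (by omega)
        rw [htp] at hlast
        have h2s : (2 : ℕ) ^ (k + 1) = 2 * 2 ^ k := by rw [pow_succ]; ring
        have h4s : (4 : ℕ) ^ (k + 1) = 4 * 4 ^ k := by rw [pow_succ]; ring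
        simp only [h2s, h4s] at hA hlast ⊢
        omega
  -- Lemma C : global upper bound
  have lemC : ∀ n : ℕ, 3 * T n ≤ 2 * (n + 1) ^ 2 := by
    intro n
    induction n using Nat.strong_induction_on with
    | _ n IH =>
      match n, IH with
      | 0, _ => simp [hT0]
      | 1, _ => rw [hT1]; norm_num
      | (m + 2), IH =>
        set n := m + 2 with hn
        have hn2 : 2 ≤ n := by omega
        set k := Nat.log 2 n with hkdef
        have hk1 : 1 ≤ k := Nat.log_pos one_lt_two hn2
        have hpow : 2 ^ k ≤ n := Nat.pow_log_le_self 2 (by omega)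
        have hlt : n < 2 ^ (k + 1) := Nat.lt_pow_succ_log_self (by norm_num) n
        have h2k : 2 ≤ 2 ^ k := by
          calc 2 = 2 ^ 1 := rfl
          _ ≤ 2 ^ k := Nat.pow_le_pow_right (by norm_num) hk1
        have h4k : (4 : ℕ) ^ k = 2 ^ k * 2 ^ k := by
          rw [show (4 : ℕ) = 2 * 2 from rfl, mul_pow]
        set j := n - 2 ^ k with hjdef
        have hjlt : j < 2 ^ k := by
          have : 2 ^ (k + 1) = 2 * 2 ^ k := by rw [pow_succ]; ring
          omega
        have hnj : n = 2 ^ k + j := by omega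
        rcases Nat.eq_zero_or_pos j with hj0 | hjpos
        · -- n = 2^k
          have hB := (lemB k).1
          rw [hnj, hj0, Nat.add_zero]
          nlinarith [hB, h4k]
        · rcases eq_or_lt_of_le (Nat.le_sub_one_of_lt hjlt) with hjtop | hjmid
          · -- n = 2^(k+1) - 1
            have hB := (lemB (k + 1)).2
            have e : n = 2 ^ (k + 1) - 1 := by
              rw [pow_succ] at *; omega
            have e2 : n + 1 = 2 ^ (k + 1) := by
              have : 2 ≤ 2 ^ (k + 1) := by
                calc 2 = 2 ^ 1 := rfl
                _ ≤ 2 ^ (k + 1) := Nat.pow_le_pow_right (by norm_num) (by omega)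
              omega
            have h4k1 : (4 : ℕ) ^ (k + 1) = 2 ^ (k + 1) * 2 ^ (k + 1) := by
              rw [show (4 : ℕ) = 2 * 2 from rfl, mul_pow]
            rw [e, show 2 ^ (k + 1) - 1 + 1 = 2 ^ (k + 1) by
              have : (2:ℕ) ≤ 2 ^ (k + 1) := by
                calc (2:ℕ) = 2 ^ 1 := rfl
                _ ≤ 2 ^ (k + 1) := Nat.pow_le_pow_right (by norm_num) (by omega)
              omega]
            nlinarith [hB, h4k1]
          · -- middle case : 1 ≤ j ≤ 2^k - 2
            have hA := lemA k hk1 j hjpos (by omega)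
            have hBj := IH j (by omega)
            have hBj1 := IH (j + 1) (by omega)
            have hB := (lemB k).1
            have hj2 : j + 2 ≤ 2 ^ k := by omega
            have hm : (j + 1) * (j + 2) ≤ (j + 1) * 2 ^ k :=
              Nat.mul_le_mul_left _ hj2
            rw [hnj]
            nlinarith [hA, hBj, hBj1, hB, h4k, hm]
  -- Now the analysis part
  set u : ℕ → ℝ := fun n => (T n : ℝ) / (n : ℝ) ^ 2 with hu
  set v : ℕ → ℝ := fun n => (2 / 3) * (1 + 1 / (n : ℝ)) ^ 2 with hv
  have huv : ∀ n : ℕ, 1 ≤ n → u n ≤ v n := by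
    intro n hn
    have hnpos : (0 : ℝ) < (n : ℝ) := by exact_mod_cast hn
    have hn2 : (0 : ℝ) < (n : ℝ) ^ 2 := by positivity
    have hC : (3 : ℝ) * (T n : ℝ) ≤ 2 * ((n : ℝ) + 1) ^ 2 := by
      have := lemC n
      have := (Nat.cast_le (α := ℝ)).2 this
      push_cast at this
      linarith
    rw [hu, hv]
    rw [div_le_iff₀ hn2]
    have hval : 2 / 3 * (1 + 1 / (n : ℝ)) ^ 2 * (n : ℝ) ^ 2 = 2 * ((n : ℝ) + 1) ^ 2 / 3 := by
      field_simp
    rw [hval]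
    linarith
  have hvle : ∀ n : ℕ, 1 ≤ n → v n ≤ 3 := by
    intro n hn
    have hnpos : (0 : ℝ) < (n : ℝ) := by exact_mod_cast hn
    have h1 : 1 / (n : ℝ) ≤ 1 := by
      rw [div_le_one hnpos]; exact_mod_cast hn
    have h0 : 0 ≤ 1 / (n : ℝ) := by positivity
    rw [hv]
    nlinarith
  have hubd : ∀ n : ℕ, u n ≤ 3 := by
    intro n
    rcases Nat.eq_zero_or_pos n with h0 | hp
    · subst h0; simp [hu, hT0]
    · exact le_trans (huv n hp) (hvle n hp)
  have hbddu : Filter.IsBoundedUnder (· ≤ ·) Filter.atTop u :=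
    Filter.isBoundedUnder_of ⟨3, hubd⟩
  have hcobdd : Filter.IsCoboundedUnder (· ≤ ·) Filter.atTop u :=
    Filter.isCoboundedUnder_le_of_le Filter.atTop (x := 0) fun n => by positivity
  have hvt : Filter.Tendsto v Filter.atTop (nhds (2 / 3)) := by
    have h1 : Filter.Tendsto (fun n : ℕ => 1 / (n : ℝ)) Filter.atTop (nhds 0) :=
      tendsto_one_div_atTop_nhds_zero_nat
    have h2 : Filter.Tendsto (fun n : ℕ => (2 / 3 : ℝ) * (1 + 1 / (n : ℝ)) ^ 2)
        Filter.atTop (nhds ((2 / 3) * (1 + 0) ^ 2)) :=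
      (((tendsto_const_nhds.add h1).pow 2).const_mul _)
    rw [hv]
    convert h2 using 2
    norm_num
  have hbddv : Filter.IsBoundedUnder (· ≤ ·) Filter.atTop v :=
    hvt.isBoundedUnder_le
  have hle : Filter.limsup u Filter.atTop ≤ 2 / 3 := by
    calc Filter.limsup u Filter.atTop ≤ Filter.limsup v Filter.atTop := by
          apply Filter.limsup_le_limsup _ hcobdd hbddv
          filter_upwards [Filter.eventually_ge_atTop 1] with n hn
          exact huv n hn
      _ = 2 / 3 := hvt.limsup_eq
  have hge : (2 / 3 : ℝ) ≤ Filter.limsup u Filter.atTop := by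
    apply Filter.le_limsup_of_frequently_le _ hbddu
    have htend : Filter.Tendsto (fun k : ℕ => 2 ^ k) Filter.atTop Filter.atTop :=
      tendsto_pow_atTop_atTop_of_one_lt one_lt_two
    apply htend.frequently
    apply Filter.Frequently.of_forall
    intro k
    have hB := (lemB k).1
    have hnat : (4 : ℕ) ^ k = 2 ^ k * 2 ^ k := by
      rw [show (4 : ℕ) = 2 * 2 from rfl, mul_pow]
    have h4k : (((2 : ℕ) ^ k : ℕ) : ℝ) ^ 2 = (((4 : ℕ) ^ k : ℕ) : ℝ) := by
      rw [hnat]; push_cast; ring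
    have hcast : (3 : ℝ) * (T (2 ^ k) : ℝ) = 2 * (((4 : ℕ) ^ k : ℕ) : ℝ) + 1 := by
      exact_mod_cast congrArg (Nat.cast (R := ℝ)) hB
    have h4pos : (0 : ℝ) < (((2 : ℕ) ^ k : ℕ) : ℝ) ^ 2 := by
      have : (0 : ℕ) < 2 ^ k := Nat.pow_pos (by norm_num)
      positivity
    show (2 / 3 : ℝ) ≤ (T (2 ^ k) : ℝ) / ((2 ^ k : ℕ) : ℝ) ^ 2
    rw [le_div_iff₀ h4pos, h4k]
    linarith
  linarith [hle, hge]
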